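/- Let α ∈ (1,2), let σ : ℝ → (0,∞) be a measurable function, let μ be the measure on ℝ with density σ(x)^{-α} with respect to Lebesgue measure, and assume I^{σ,α} := ∫_ℝ σ(x)^{-α}|x|^{α-1} dx < ∞. Then the kernel G_X^0(x,y) := (ω_α/2)(|x|^{α-1} + |y|^{α-1} - |x-y|^{α-1}) satisfies ∫_ℝ ∫_ℝ G_X^0(x,y)^2 μ(dx) μ(dy) ≤ (ω_α · I^{σ,α})^2 < ∞; in particular G_X^0 ∈ L²(ℝ×ℝ, μ×μ). -/

import Mathlib

open Real MeasureTheory ENNReal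

lemma rpow_subadd_aux {p : ℝ} (hp0 : 0 ≤ p) (hp1 : p ≤ 1) {a b : ℝ} (ha : 0 ≤ a) (hb : 0 ≤ b) :
    (a + b) ^ p ≤ a ^ p + b ^ p := by
  have h := NNReal.rpow_add_le_add_rpow a.toNNReal b.toNNReal hp0 hp1
  rw [← Real.toNNReal_add ha hb] at h
  have h' := NNReal.coe_le_coe.mpr h
  rwa [NNReal.coe_rpow, NNReal.coe_add, NNReal.coe_rpow, NNReal.coe_rpow,
    Real.coe_toNNReal _ (add_nonneg ha hb), Real.coe_toNNReal _ ha, Real.coe_toNNReal _ hb] at h'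

/-- Let `α ∈ (1,2)`, `σ : ℝ → (0,∞)` measurable, `μ` the measure on `ℝ`
with density `σ(x)^(-α)` w.r.t. Lebesgue measure, and assume
`I = ∫ σ(x)^(-α) |x|^(α-1) dx < ∞`. Then the kernel
`G_X^0(x,y) = (ω_α/2)(|x|^(α-1) + |y|^(α-1) - |x-y|^(α-1))` satisfies
`∫∫ G_X^0(x,y)^2 dμ dμ ≤ (ω_α · I)^2 < ∞`; in particular `G_X^0 ∈ L²(ℝ×ℝ, μ×μ)`. -/
theorem stmt_0 (α : ℝ) (hα : α ∈ Set.Ioo (1 : ℝ) 2)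
    (σ : ℝ → ℝ) (hσ_meas : Measurable σ) (hσ_pos : ∀ x, 0 < σ x)
    (μ : Measure ℝ) (hμ : μ = volume.withDensity (fun x => ENNReal.ofReal (σ x ^ (-α))))
    (I : ℝ≥0∞) (hI : I = ∫⁻ x, ENNReal.ofReal (σ x ^ (-α) * |x| ^ (α - 1)))
    (hIfin : I < ⊤)
    (ω : ℝ) (hω : ω = -1 / (Real.cos (π * α / 2) * Real.Gamma α))
    (G : ℝ → ℝ → ℝ)
    (hG : ∀ x y, G x y = ω / 2 * (|x| ^ (α - 1) + |y| ^ (α - 1) - |x - y| ^ (α - 1))) :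
    (∫⁻ x, ∫⁻ y, ENNReal.ofReal ((G x y) ^ 2) ∂μ ∂μ ≤ (ENNReal.ofReal ω * I) ^ 2) ∧
    (ENNReal.ofReal ω * I) ^ 2 < ⊤ ∧
    MemLp (fun p : ℝ × ℝ => G p.1 p.2) 2 (μ.prod μ) := by
  obtain ⟨hα1, hα2⟩ := hα
  have hp0 : (0:ℝ) ≤ α - 1 := by linarith
  have hp1 : α - 1 ≤ 1 := by linarith
  have hπ := Real.pi_pos
  have hcos : Real.cos (π * α / 2) < 0 := by
    apply Real.cos_neg_of_pi_div_two_lt_of_lt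
    · nlinarith
    · nlinarith
  have hωpos : 0 < ω := by
    rw [hω]
    exact div_pos_iff.mpr (Or.inr ⟨by norm_num,
      mul_neg_of_neg_of_pos hcos (Real.Gamma_pos_of_pos (by linarith))⟩)
  -- pointwise bound
  have habs : ∀ x y : ℝ, G x y ^ 2 ≤ ω ^ 2 * (|x| ^ (α - 1) * |y| ^ (α - 1)) := by
    intro x y
    set a := |x| ^ (α - 1) with haa
    set b := |y| ^ (α - 1) with hbb
    set c := |x - y| ^ (α - 1) with hcc
    have ha : 0 ≤ a := Real.rpow_nonneg (abs_nonneg _) _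
    have hb : 0 ≤ b := Real.rpow_nonneg (abs_nonneg _) _
    have sub1 : a ≤ c + b := by
      have h1 : |x| ≤ |x - y| + |y| := by simpa using abs_add_le (x - y) y
      calc a ≤ (|x - y| + |y|) ^ (α - 1) :=
            Real.rpow_le_rpow (abs_nonneg _) h1 hp0
        _ ≤ c + b := rpow_subadd_aux hp0 hp1 (abs_nonneg _) (abs_nonneg _)
    have sub2 : b ≤ c + a := by
      have h1 : |y| ≤ |x - y| + |x| := by
        have h2 : |y| ≤ |y - x| + |x| := by simpa using abs_add_le (y - x) x
        rwa [abs_sub_comm] at h2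
      calc b ≤ (|x - y| + |x|) ^ (α - 1) :=
            Real.rpow_le_rpow (abs_nonneg _) h1 hp0
        _ ≤ c + a := rpow_subadd_aux hp0 hp1 (abs_nonneg _) (abs_nonneg _)
    have sub3 : c ≤ a + b := by
      have h1 : |x - y| ≤ |x| + |y| := abs_sub _ _
      calc c ≤ (|x| + |y|) ^ (α - 1) :=
            Real.rpow_le_rpow (abs_nonneg _) h1 hp0
        _ ≤ a + b := rpow_subadd_aux hp0 hp1 (abs_nonneg _) (abs_nonneg _)
    have hGnn : 0 ≤ G x y := by
      rw [hG]; have : 0 ≤ a + b - c := by linarith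
      positivity
    have hle : G x y ≤ ω * min a b := by
      rw [hG]
      rcases le_total a b with h | h
      · rw [min_eq_left h]; nlinarith [hωpos.le]
      · rw [min_eq_right h]; nlinarith [hωpos.le]
    have hmin : 0 ≤ min a b := le_min ha hb
    calc G x y ^ 2 ≤ (ω * min a b) ^ 2 := by
          apply pow_le_pow_left₀ hGnn hle
      _ = ω ^ 2 * (min a b * min a b) := by ring
      _ ≤ ω ^ 2 * (a * b) := by
          apply mul_le_mul_of_nonneg_left _ (sq_nonneg ω)
          exact mul_le_mul (min_le_left a b) (min_le_right a b) hmin ha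
  -- measurability
  have hd_meas : Measurable fun x => ENNReal.ofReal (σ x ^ (-α)) := by fun_prop
  have hf_meas : Measurable fun x : ℝ => ENNReal.ofReal (|x| ^ (α - 1)) := by fun_prop
  have hIμ : ∫⁻ y, ENNReal.ofReal (|y| ^ (α - 1)) ∂μ = I := by
    rw [hμ, lintegral_withDensity_eq_lintegral_mul _ hd_meas hf_meas, hI]
    congr 1; funext y
    simp only [Pi.mul_apply]
    rw [← ENNReal.ofReal_mul (Real.rpow_nonneg (hσ_pos y).le _)]
  have hGmeas : Measurable fun p : ℝ × ℝ => G p.1 p.2 := by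
    have : (fun p : ℝ × ℝ => G p.1 p.2) =
        fun p : ℝ × ℝ => ω / 2 * (|p.1| ^ (α - 1) + |p.2| ^ (α - 1) - |p.1 - p.2| ^ (α - 1)) := by
      funext p; exact hG _ _
    rw [this]
    fun_prop
  -- the main bound
  have key : ∫⁻ x, ∫⁻ y, ENNReal.ofReal (G x y ^ 2) ∂μ ∂μ ≤ (ENNReal.ofReal ω * I) ^ 2 := by
    have hb : ∀ x y : ℝ, ENNReal.ofReal (G x y ^ 2) ≤
        (ENNReal.ofReal ω) ^ 2 * ENNReal.ofReal (|x| ^ (α - 1)) * ENNReal.ofReal (|y| ^ (α - 1)) := by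
      intro x y
      rw [← ENNReal.ofReal_pow hωpos.le,
        ← ENNReal.ofReal_mul (by positivity), ← ENNReal.ofReal_mul (by positivity)]
      exact ENNReal.ofReal_le_ofReal (by nlinarith [habs x y])
    calc ∫⁻ x, ∫⁻ y, ENNReal.ofReal (G x y ^ 2) ∂μ ∂μ
        ≤ ∫⁻ x, ∫⁻ y, (ENNReal.ofReal ω) ^ 2 * ENNReal.ofReal (|x| ^ (α - 1)) *
            ENNReal.ofReal (|y| ^ (α - 1)) ∂μ ∂μ :=
          lintegral_mono fun x => lintegral_mono fun y => hb x y
      _ = (ENNReal.ofReal ω) ^ 2 * I * I := by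
          have inner : ∀ x : ℝ, ∫⁻ y, (ENNReal.ofReal ω) ^ 2 * ENNReal.ofReal (|x| ^ (α - 1)) *
              ENNReal.ofReal (|y| ^ (α - 1)) ∂μ
              = (ENNReal.ofReal ω) ^ 2 * I * ENNReal.ofReal (|x| ^ (α - 1)) := by
            intro x
            rw [lintegral_const_mul _ hf_meas, hIμ]; ring
          simp_rw [inner]
          rw [lintegral_const_mul _ hf_meas, hIμ]
      _ = (ENNReal.ofReal ω * I) ^ 2 := by ring
  have hfin : (ENNReal.ofReal ω * I) ^ 2 < ⊤ := by
    have : ENNReal.ofReal ω * I < ⊤ := ENNReal.mul_lt_top ENNReal.ofReal_lt_top hIfin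
    exact ENNReal.pow_lt_top this
  refine ⟨key, hfin, ?_⟩
  subst hμ
  constructor
  · exact hGmeas.aestronglyMeasurable
  · rw [eLpNorm_eq_lintegral_rpow_enorm_toReal (by norm_num) (by norm_num)]
    refine ENNReal.rpow_lt_top_of_nonneg (by norm_num) ?_
    have heq : ∀ p : ℝ × ℝ, (‖G p.1 p.2‖ₑ) ^ ((2 : ℝ≥0∞).toReal)
        = ENNReal.ofReal (G p.1 p.2 ^ 2) := by
      intro p
      have h2 : ((2 : ℝ≥0∞).toReal) = ((2 : ℕ) : ℝ) := by norm_num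
      rw [h2, ENNReal.rpow_natCast, ← ofReal_norm,
        ← ENNReal.ofReal_pow (norm_nonneg _)]
      congr 1
      rw [Real.norm_eq_abs, sq_abs]
    simp_rw [heq]
    have hsq : Measurable fun p : ℝ × ℝ => ENNReal.ofReal (G p.1 p.2 ^ 2) :=
      (hGmeas.pow_const 2).ennreal_ofReal
    rw [lintegral_prod _ hsq.aemeasurable]
    exact (lt_of_le_of_lt key hfin).ne
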